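/- Let Λ ⊆ ℂ and set K_Λ = ℚ((Λ−Λ) ∪ (conjugate of Λ−Λ)), the field generated over ℚ by all differences of elements of Λ and their complex conjugates. Then the cross ratio of the slopes of any four pairwise nonparallel Λ-directions lies in K_Λ ∩ ℝ. -/

import Mathlib

/-- det(z,w) = Re z · Im w − Im z · Re w; it vanishes iff z and w are parallel. -/
def detC (z w : ℂ) : ℝ := z.re * w.im - z.im * w.re

/-- The cross ratio ⟨sl z₁, sl z₂, sl z₃, sl z₄⟩ of the slopes sl z = Im z / Re z
(with value ∞ when Re z = 0, and the usual conventions for ∞), expressed via the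
determinant formula, which is valid in all cases including infinite slopes. -/
noncomputable def crossRatioSlopes (z1 z2 z3 z4 : ℂ) : ℝ :=
  (detC z1 z3 * detC z2 z4) / (detC z2 z3 * detC z1 z4)

/-- u is a Λ-direction: a unit vector parallel to a nonzero difference of points of Λ. -/
def IsDirectionOf (Λ : Set ℂ) (u : ℂ) : Prop :=
  ‖u‖ = 1 ∧ ∃ v ∈ Λ, ∃ w ∈ Λ, v ≠ w ∧ ∃ r : ℝ, u = r * (v - w)

lemma detC_smul (r s : ℝ) (z w : ℂ) :
    detC ((r : ℂ) * z) ((s : ℂ) * w) = r * s * detC z w := by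
  simp only [detC, Complex.mul_re, Complex.mul_im, Complex.ofReal_re, Complex.ofReal_im]
  ring

lemma detC_cast (z w : ℂ) :
    ((detC z w : ℝ) : ℂ) * (2 * Complex.I) =
      (starRingEnd ℂ) z * w - z * (starRingEnd ℂ) w := by
  simp only [detC, Complex.ext_iff, Complex.mul_re, Complex.mul_im, Complex.ofReal_re,
    Complex.ofReal_im, Complex.sub_re, Complex.sub_im, Complex.conj_re, Complex.conj_im,
    Complex.I_re, Complex.I_im, Complex.re_ofNat, Complex.im_ofNat]
  constructor <;> ring

/-- The cross ratio of slopes of four pairwise nonparallel Λ-directions lies in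
K_Λ = ℚ((Λ−Λ) ∪ conj(Λ−Λ)); being real, it lies in K_Λ ∩ ℝ. -/
theorem crossRatio_mem_KLambda (Λ : Set ℂ) (u1 u2 u3 u4 : ℂ)
    (hd1 : IsDirectionOf Λ u1) (hd2 : IsDirectionOf Λ u2)
    (hd3 : IsDirectionOf Λ u3) (hd4 : IsDirectionOf Λ u4)
    (h12 : detC u1 u2 ≠ 0) (h13 : detC u1 u3 ≠ 0) (h14 : detC u1 u4 ≠ 0)
    (h23 : detC u2 u3 ≠ 0) (h24 : detC u2 u4 ≠ 0) (h34 : detC u3 u4 ≠ 0) :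
    ((crossRatioSlopes u1 u2 u3 u4 : ℝ) : ℂ) ∈
      Subfield.closure ({z : ℂ | ∃ v ∈ Λ, ∃ w ∈ Λ, z = v - w}
        ∪ {z : ℂ | ∃ v ∈ Λ, ∃ w ∈ Λ, z = (starRingEnd ℂ) (v - w)}) := by
  obtain ⟨-, v1, hv1, w1, hw1, -, r1, hu1⟩ := hd1
  obtain ⟨-, v2, hv2, w2, hw2, -, r2, hu2⟩ := hd2
  obtain ⟨-, v3, hv3, w3, hw3, -, r3, hu3⟩ := hd3
  obtain ⟨-, v4, hv4, w4, hw4, -, r4, hu4⟩ := hd4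
  set d1 := v1 - w1 with hd1'
  set d2 := v2 - w2 with hd2'
  set d3 := v3 - w3 with hd3'
  set d4 := v4 - w4 with hd4'
  set K := Subfield.closure ({z : ℂ | ∃ v ∈ Λ, ∃ w ∈ Λ, z = v - w}
      ∪ {z : ℂ | ∃ v ∈ Λ, ∃ w ∈ Λ, z = (starRingEnd ℂ) (v - w)}) with hK
  have hm1 : d1 ∈ K := Subfield.subset_closure (Or.inl ⟨v1, hv1, w1, hw1, rfl⟩)
  have hm2 : d2 ∈ K := Subfield.subset_closure (Or.inl ⟨v2, hv2, w2, hw2, rfl⟩)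
  have hm3 : d3 ∈ K := Subfield.subset_closure (Or.inl ⟨v3, hv3, w3, hw3, rfl⟩)
  have hm4 : d4 ∈ K := Subfield.subset_closure (Or.inl ⟨v4, hv4, w4, hw4, rfl⟩)
  have hc1 : (starRingEnd ℂ) d1 ∈ K := Subfield.subset_closure (Or.inr ⟨v1, hv1, w1, hw1, rfl⟩)
  have hc2 : (starRingEnd ℂ) d2 ∈ K := Subfield.subset_closure (Or.inr ⟨v2, hv2, w2, hw2, rfl⟩)
  have hc3 : (starRingEnd ℂ) d3 ∈ K := Subfield.subset_closure (Or.inr ⟨v3, hv3, w3, hw3, rfl⟩)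
  have hc4 : (starRingEnd ℂ) d4 ∈ K := Subfield.subset_closure (Or.inr ⟨v4, hv4, w4, hw4, rfl⟩)
  have H13 : r1 * r3 * detC d1 d3 ≠ 0 := by rw [hu1, hu3, detC_smul] at h13; exact h13
  have H24 : r2 * r4 * detC d2 d4 ≠ 0 := by rw [hu2, hu4, detC_smul] at h24; exact h24
  have H23 : r2 * r3 * detC d2 d3 ≠ 0 := by rw [hu2, hu3, detC_smul] at h23; exact h23
  have H14 : r1 * r4 * detC d1 d4 ≠ 0 := by rw [hu1, hu4, detC_smul] at h14; exact h14
  have hr1 : r1 ≠ 0 := fun h => H13 (by rw [h]; ring)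
  have hr2 : r2 ≠ 0 := fun h => H24 (by rw [h]; ring)
  have hr3 : r3 ≠ 0 := fun h => H13 (by rw [h]; ring)
  have hr4 : r4 ≠ 0 := fun h => H24 (by rw [h]; ring)
  have hD13 : detC d1 d3 ≠ 0 := right_ne_zero_of_mul H13
  have hD24 : detC d2 d4 ≠ 0 := right_ne_zero_of_mul H24
  have hD23 : detC d2 d3 ≠ 0 := right_ne_zero_of_mul H23
  have hD14 : detC d1 d4 ≠ 0 := right_ne_zero_of_mul H14
  have key : crossRatioSlopes u1 u2 u3 u4
      = (detC d1 d3 * detC d2 d4) / (detC d2 d3 * detC d1 d4) := by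
    rw [crossRatioSlopes, hu1, hu2, hu3, hu4, detC_smul, detC_smul, detC_smul, detC_smul]
    field_simp
  set E13 : ℂ := (starRingEnd ℂ) d1 * d3 - d1 * (starRingEnd ℂ) d3 with hE13
  set E24 : ℂ := (starRingEnd ℂ) d2 * d4 - d2 * (starRingEnd ℂ) d4 with hE24
  set E23 : ℂ := (starRingEnd ℂ) d2 * d3 - d2 * (starRingEnd ℂ) d3 with hE23
  set E14 : ℂ := (starRingEnd ℂ) d1 * d4 - d1 * (starRingEnd ℂ) d4 with hE14
  have h2I : (2 * Complex.I : ℂ) ≠ 0 := by simp [Complex.I_ne_zero]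
  have c13 : ((detC d1 d3 : ℝ) : ℂ) = E13 / (2 * Complex.I) :=
    eq_div_iff h2I |>.mpr (detC_cast d1 d3)
  have c24 : ((detC d2 d4 : ℝ) : ℂ) = E24 / (2 * Complex.I) :=
    eq_div_iff h2I |>.mpr (detC_cast d2 d4)
  have c23 : ((detC d2 d3 : ℝ) : ℂ) = E23 / (2 * Complex.I) :=
    eq_div_iff h2I |>.mpr (detC_cast d2 d3)
  have c14 : ((detC d1 d4 : ℝ) : ℂ) = E14 / (2 * Complex.I) :=
    eq_div_iff h2I |>.mpr (detC_cast d1 d4)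
  have hE23ne : E23 ≠ 0 := by
    intro h
    apply hD23
    have := c23
    rw [h, zero_div] at this
    exact_mod_cast this
  have hE14ne : E14 ≠ 0 := by
    intro h
    apply hD14
    have := c14
    rw [h, zero_div] at this
    exact_mod_cast this
  have final : ((crossRatioSlopes u1 u2 u3 u4 : ℝ) : ℂ) = (E13 * E24) / (E23 * E14) := by
    rw [key]
    push_cast
    rw [c13, c24, c23, c14]
    field_simp
  rw [final]
  exact K.div_mem (K.mul_mem (K.sub_mem (K.mul_mem hc1 hm3) (K.mul_mem hm1 hc3))
      (K.sub_mem (K.mul_mem hc2 hm4) (K.mul_mem hm2 hc4)))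
    (K.mul_mem (K.sub_mem (K.mul_mem hc2 hm3) (K.mul_mem hm2 hc3))
      (K.sub_mem (K.mul_mem hc1 hm4) (K.mul_mem hm1 hc4)))
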